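/- (Key elementary inequality in the super-solution construction.) Let N ≥ 1, β > 0, set p := ⌊β⌋ + 1 and q := p/β. Let R ≥ 1, 0 < τ < 1, and let x, y ∈ ℝ^N satisfy |x| ≥ R and |y| < |x|/2. Then τ (|x|^β − |x+y|^β) / (1 + τ |x+y|^β) ≤ 2^β R^{−1/q} (1 + |y|)^β. -/

import Mathlib

open MeasureTheory Filter Metric Set

noncomputable section

abbrev Sp (N : ℕ) := EuclideanSpace ℝ (Fin N)

/-- The rescaled kernel `J_ε(z) = ε^{-N} J(z/ε)`. -/
def Jresc (N : ℕ) (J : Sp N → ℝ) (ε : ℝ) (z : Sp N) : ℝ := (1 / ε ^ N) * J (ε⁻¹ • z)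

/-- The convolution `(J_ε ∗ u)(x)`. -/
def convJ (N : ℕ) (J : Sp N → ℝ) (ε : ℝ) (u : Sp N → ℝ) (x : Sp N) : ℝ :=
  ∫ y, Jresc N J ε (x - y) * u y

/-- `u` satisfies the nonlocal KPP equation at the point `x`:
`ε^{-m} (J_ε ∗ u - u)(x) + u(x)(a(x) - u(x)) = 0`. -/
def kppEq (N : ℕ) (J a : Sp N → ℝ) (m ε : ℝ) (u : Sp N → ℝ) (x : Sp N) : Prop :=
  (1 / ε ^ m) * (convJ N J ε u x - u x) + u x * (a x - u x) = 0

/-- Assumption (1.1): `a` continuous, bounded, `a⁺ ≢ 0`, `limsup_{|x|→∞} a(x) < 0`. -/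
def assumpA (N : ℕ) (a : Sp N → ℝ) : Prop :=
  Continuous a ∧ (∃ C, ∀ x, |a x| ≤ C) ∧ (∃ x, 0 < a x) ∧
    (∃ R δ : ℝ, 0 < δ ∧ ∀ x : Sp N, R ≤ ‖x‖ → a x ≤ -δ)

/-- Assumption (1.4): `J ∈ L¹` nonnegative, radially symmetric, with unit mass and
finite `m`-th order moment. -/
def assumpJ (N : ℕ) (J : Sp N → ℝ) (m : ℝ) : Prop :=
  Integrable J ∧ (∀ x, 0 ≤ J x) ∧ (∀ x y : Sp N, ‖x‖ = ‖y‖ → J x = J y) ∧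
    (∫ x, J x) = 1 ∧ Integrable (fun x => J x * ‖x‖ ^ m)

lemma my_rpow_add_le (a b c : ℝ) (ha : 0 ≤ a) (hb : 0 ≤ b) (hc0 : 0 ≤ c) (hc1 : c ≤ 1) :
    (a + b) ^ c ≤ a ^ c + b ^ c := by
  lift a to NNReal using ha
  lift b to NNReal using hb
  exact_mod_cast NNReal.rpow_add_le_add_rpow a b hc0 hc1

lemma my_pow_sub (r s : ℝ) (hs : 0 ≤ s) (hsr : s ≤ r) :
    ∀ n : ℕ, r ^ (n + 1) - s ^ (n + 1) ≤ ((n : ℝ) + 1) * r ^ n * (r - s) := by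
  intro n
  induction n with
  | zero => simp
  | succ n ih =>
    have hr : 0 ≤ r := hs.trans hsr
    have h2 : s ^ (n + 1) ≤ r ^ (n + 1) := pow_le_pow_left₀ hs hsr _
    have h3 : r * (r ^ (n + 1) - s ^ (n + 1)) ≤ r * (((n : ℝ) + 1) * r ^ n * (r - s)) :=
      mul_le_mul_of_nonneg_left ih hr
    have h4 : s ^ (n + 1) * (r - s) ≤ r ^ (n + 1) * (r - s) :=
      mul_le_mul_of_nonneg_right h2 (by linarith)
    have hid : r ^ (n + 1 + 1) - s ^ (n + 1 + 1)
        = r * (r ^ (n + 1) - s ^ (n + 1)) + s ^ (n + 1) * (r - s) := by ring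
    have hid2 : r * (((n : ℝ) + 1) * r ^ n * (r - s)) = ((n : ℝ) + 1) * r ^ (n + 1) * (r - s) := by
      ring
    push_cast
    linarith [h3, h4]


/-- **Key elementary inequality in the super-solution construction.** With `p = ⌊β⌋ + 1` and
`q = p/β`, for `R ≥ 1`, `0 < τ < 1`, `|x| ≥ R` and `|y| < |x|/2`, one has
`τ(|x|^β - |x+y|^β)/(1 + τ|x+y|^β) ≤ 2^β R^{-1/q} (1+|y|)^β`. -/
theorem statement17 (N : ℕ) (hN : 1 ≤ N) (β : ℝ) (hβ : 0 < β)
    (p : ℕ) (hp : p = Nat.floor β + 1) (q : ℝ) (hq : q = (p : ℝ) / β)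
    (R : ℝ) (hR : 1 ≤ R) (τ : ℝ) (hτ0 : 0 < τ) (hτ1 : τ < 1)
    (x y : Sp N) (hx : R ≤ ‖x‖) (hy : ‖y‖ < ‖x‖ / 2) :
    τ * (‖x‖ ^ β - ‖x + y‖ ^ β) / (1 + τ * ‖x + y‖ ^ β) ≤
      2 ^ β * R ^ (-1 / q) * (1 + ‖y‖) ^ β := by
  have hr1 : (1 : ℝ) ≤ ‖x‖ := hR.trans hx
  have hr0 : (0 : ℝ) < ‖x‖ := lt_of_lt_of_le one_pos hr1
  have ht0 : (0 : ℝ) ≤ ‖y‖ := norm_nonneg y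
  have hs0 : (0 : ℝ) ≤ ‖x + y‖ := norm_nonneg _
  have htri : ‖x‖ ≤ ‖x + y‖ + ‖y‖ := by
    have h := norm_add_le (x + y) (-y)
    simpa using h
  have h2s : ‖x‖ ≤ 2 * ‖x + y‖ := by linarith
  have hD : 0 < 1 + τ * ‖x + y‖ ^ β := by positivity
  have hp0 : 0 < p := by omega
  have hpR : (0 : ℝ) < (p : ℝ) := by exact_mod_cast hp0
  have hβp : β ≤ (p : ℝ) := by
    rw [hp]; push_cast; exact (Nat.lt_floor_add_one β).le
  set c : ℝ := β / (p : ℝ) with hc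
  have hc0 : 0 < c := div_pos hβ hpR
  have hc1 : c ≤ 1 := by rw [hc, div_le_one hpR]; exact hβp
  have hpc : (p : ℝ) * c = β := by rw [hc]; field_simp
  have hq' : -1 / q = -c := by rw [hq, hc]; field_simp
  rw [hq', div_le_iff₀ hD]
  have hRHS0 : (0 : ℝ) ≤ 2 ^ β * R ^ (-c) * (1 + ‖y‖) ^ β * (1 + τ * ‖x + y‖ ^ β) := by
    positivity
  rcases le_or_gt ‖x‖ ‖x + y‖ with h | h
  · have h1 : ‖x‖ ^ β ≤ ‖x + y‖ ^ β := Real.rpow_le_rpow hr0.le h hβ.le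
    nlinarith [mul_nonneg hτ0.le (sub_nonneg.mpr h1)]
  · -- main case: ‖x + y‖ < ‖x‖
    set r := ‖x‖
    set s := ‖x + y‖
    set t := ‖y‖
    have hsr : s ≤ r := h.le
    -- step 1 : r ^ β - s ^ β ≤ (r ^ p - s ^ p) ^ c
    have ha0 : (0 : ℝ) ≤ r ^ p - s ^ p := by
      have := pow_le_pow_left₀ hs0 hsr p
      linarith
    have hrpc : (r ^ p : ℝ) ^ c = r ^ β := by
      rw [← Real.rpow_natCast r p, ← Real.rpow_mul hr0.le, hpc]
    have hspc : (s ^ p : ℝ) ^ c = s ^ β := by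
      rw [← Real.rpow_natCast s p, ← Real.rpow_mul hs0, hpc]
    have step1 : r ^ β - s ^ β ≤ (r ^ p - s ^ p) ^ c := by
      have := my_rpow_add_le (r ^ p - s ^ p) (s ^ p) c ha0 (by positivity) hc0.le hc1
      rw [sub_add_cancel, hrpc, hspc] at this
      linarith
    -- step 2 : r ^ p - s ^ p ≤ (p * t) * r ^ (p - 1)
    have hrs_t : r - s ≤ t := by linarith
    have step2 : r ^ p - s ^ p ≤ ((p : ℝ) * t) * r ^ (p - 1) := by
      have h1 := my_pow_sub r s hs0 hsr (p - 1)
      have hps : p - 1 + 1 = p := by omega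
      rw [hps] at h1
      have h2 : ((p - 1 : ℕ) : ℝ) + 1 = (p : ℝ) := by
        have : ((p - 1 : ℕ) : ℝ) = (p : ℝ) - 1 := by
          push_cast [Nat.cast_sub hp0]; ring
        rw [this]; ring
      rw [h2] at h1
      have h3 : (p : ℝ) * r ^ (p - 1) * (r - s) ≤ (p : ℝ) * r ^ (p - 1) * t :=
        mul_le_mul_of_nonneg_left hrs_t (by positivity)
      nlinarith [h1, h3]
    -- step 3 : (r^p - s^p)^c ≤ (1+t)^β * (r^β * r^(-c))
    have hbern : (p : ℝ) * t ≤ (1 + t) ^ p := by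
      have := one_add_mul_le_pow (a := t) (by linarith) p
      calc (p : ℝ) * t ≤ 1 + (p : ℝ) * t := by linarith
        _ ≤ (1 + t) ^ p := this
    have hptc : ((p : ℝ) * t) ^ c ≤ (1 + t) ^ β := by
      calc ((p : ℝ) * t) ^ c ≤ ((1 + t) ^ p) ^ c :=
            Real.rpow_le_rpow (by positivity) hbern hc0.le
        _ = (1 + t) ^ β := by
            rw [← Real.rpow_natCast (1 + t) p, ← Real.rpow_mul (by linarith), hpc]
    have hrp1 : (r ^ (p - 1) : ℝ) ^ c = r ^ β * r ^ (-c) := by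
      rw [← Real.rpow_natCast r (p - 1), ← Real.rpow_mul hr0.le, ← Real.rpow_add hr0]
      congr 1
      have : ((p - 1 : ℕ) : ℝ) = (p : ℝ) - 1 := by
        push_cast [Nat.cast_sub hp0]; ring
      rw [this]
      linear_combination hpc
    have step3 : (r ^ p - s ^ p) ^ c ≤ (1 + t) ^ β * (r ^ β * r ^ (-c)) := by
      calc (r ^ p - s ^ p) ^ c ≤ (((p : ℝ) * t) * r ^ (p - 1)) ^ c :=
            Real.rpow_le_rpow ha0 step2 hc0.le
        _ = ((p : ℝ) * t) ^ c * (r ^ (p - 1) : ℝ) ^ c :=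
            Real.mul_rpow (by positivity) (by positivity)
        _ ≤ (1 + t) ^ β * (r ^ β * r ^ (-c)) := by
            rw [hrp1]
            exact mul_le_mul_of_nonneg_right hptc (by positivity)
    -- combine
    have hrC : r ^ (-c) ≤ R ^ (-c) := by
      rw [Real.rpow_neg hr0.le, Real.rpow_neg (by linarith)]
      have hRc : (0 : ℝ) < R ^ c := Real.rpow_pos_of_pos (by linarith) c
      exact inv_anti₀ hRc (Real.rpow_le_rpow (by linarith) hx hc0.le)
    have hr2 : r ^ β ≤ 2 ^ β * s ^ β := by
      calc r ^ β ≤ (2 * s) ^ β := Real.rpow_le_rpow hr0.le h2s hβ.le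
        _ = 2 ^ β * s ^ β := Real.mul_rpow (by norm_num) hs0
    calc τ * (r ^ β - s ^ β) ≤ τ * ((1 + t) ^ β * (r ^ β * r ^ (-c))) := by
          have := step1.trans step3
          exact mul_le_mul_of_nonneg_left this hτ0.le
      _ = (1 + t) ^ β * (r ^ (-c) * (τ * r ^ β)) := by ring
      _ ≤ (1 + t) ^ β * (R ^ (-c) * (τ * (2 ^ β * s ^ β))) := by
          have h1 : τ * r ^ β ≤ τ * (2 ^ β * s ^ β) := mul_le_mul_of_nonneg_left hr2 hτ0.le
          have h2 : r ^ (-c) * (τ * r ^ β) ≤ R ^ (-c) * (τ * (2 ^ β * s ^ β)) := by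
            apply mul_le_mul hrC h1 (by positivity) (by positivity)
          exact mul_le_mul_of_nonneg_left h2 (by positivity)
      _ = 2 ^ β * R ^ (-c) * (1 + t) ^ β * (τ * s ^ β) := by ring
      _ ≤ 2 ^ β * R ^ (-c) * (1 + t) ^ β * (1 + τ * s ^ β) := by
          have : τ * s ^ β ≤ 1 + τ * s ^ β := by linarith
          exact mul_le_mul_of_nonneg_left this (by positivity)
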